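/- Let W be an n × k integer matrix (k < n) with full column rank, with rows w₁,...,wₙ, and let β = max |W_{ij}|. Then for any real α ≥ 1 + k^k β^k and any subset S ⊆ {1,...,n} with |S| = k−1 and rank(W_S) = k−1, the k × k matrix formed by stacking the row α w₁ + α² w₂ + ... + αⁿ wₙ on top of W_S has full column rank (nonzero determinant). -/

import Mathlib

open scoped Matrix

/-- Rank is invariant under permuting rows by an equivalence. -/
lemma aux_rank_submatrix_equiv_left {l m n R : Type*} [Fintype l] [Fintype m] [Fintype n]
    [CommRing R] (A : Matrix m n R) (e : l ≃ m) :
    (A.submatrix (e : l → m) id).rank = A.rank := by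
  have h : (A.submatrix (e : l → m) id).mulVecLin
      = (LinearEquiv.funCongrLeft R R e : (m → R) →ₗ[R] (l → R)) ∘ₗ A.mulVecLin := by
    have h2 : A.submatrix (e : l → m) id = A.submatrix (e : l → m) (⇑(Equiv.refl n)) := rfl
    rw [h2, Matrix.mulVecLin_submatrix]
    ext x i
    simp [LinearMap.funLeft]
  rw [Matrix.rank, Matrix.rank, h, LinearMap.range_comp, LinearEquiv.finrank_map_eq]

/-- Determinant is additive over a finite sum in a fixed row. -/
lemma aux_det_updateRow_sum {k : ℕ} {R : Type*} [CommRing R] (A : Matrix (Fin k) (Fin k) R)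
    (i0 : Fin k) {ι : Type*} (s : Finset ι) (f : ι → (Fin k → R)) :
    (A.updateRow i0 (∑ i ∈ s, f i)).det = ∑ i ∈ s, (A.updateRow i0 (f i)).det := by
  classical
  induction s using Finset.induction_on with
  | empty =>
      rw [Finset.sum_empty, Finset.sum_empty]
      exact Matrix.det_eq_zero_of_row_eq_zero i0 (fun j => by simp)
  | @insert a s h ih =>
      rw [Finset.sum_insert h, Finset.sum_insert h, Matrix.det_updateRow_add, ih]

/-- A nonzero integer polynomial with coefficients bounded by `Bd`, evaluated at
`α ≥ 1 + Bd`, is nonzero. -/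
lemma aux_poly_ne_zero (n : ℕ) (c : ℕ → ℤ) (Bd α : ℝ)
    (hbd : ∀ j, |(c j : ℝ)| ≤ Bd) (hα : 1 + Bd ≤ α)
    (hne : ∃ j, j < n ∧ c j ≠ 0) :
    ∑ j ∈ Finset.range n, (c j : ℝ) * α ^ (j + 1) ≠ 0 := by
  classical
  obtain ⟨j0, hj0n, hj0⟩ := hne
  have hB1 : (1 : ℝ) ≤ Bd := le_trans (by exact_mod_cast Int.one_le_abs hj0) (hbd j0)
  have hαpos : (0 : ℝ) < α := by linarith
  set T : Finset ℕ := (Finset.range n).filter (fun j => c j ≠ 0) with hT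
  have hTne : T.Nonempty := ⟨j0, by simp [hT, Finset.mem_filter, Finset.mem_range, hj0n, hj0]⟩
  set m := T.max' hTne with hm
  have hmT : m ∈ T := T.max'_mem hTne
  have hmn : m < n := Finset.mem_range.1 (Finset.mem_filter.1 hmT).1
  have hcm : c m ≠ 0 := (Finset.mem_filter.1 hmT).2
  have hzero : ∀ j, m < j → j < n → c j = 0 := by
    intro j hj hjn
    by_contra h
    exact absurd (T.le_max' j (Finset.mem_filter.2 ⟨Finset.mem_range.2 hjn, h⟩)) (not_le.2 hj)
  have hsum : ∑ j ∈ Finset.range n, (c j : ℝ) * α ^ (j + 1)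
      = ∑ j ∈ Finset.range (m + 1), (c j : ℝ) * α ^ (j + 1) := by
    symm
    apply Finset.sum_subset
    · intro j hj
      exact Finset.mem_range.2 (lt_of_lt_of_le (Finset.mem_range.1 hj) hmn)
    · intro j hjn hjm
      have hj' : ¬ j < m + 1 := fun hc => hjm (Finset.mem_range.2 hc)
      rw [hzero j (by omega) (Finset.mem_range.1 hjn)]
      simp
  rw [hsum, Finset.sum_range_succ]
  -- bound the tail
  have htel : (α - 1) * ∑ j ∈ Finset.range m, α ^ (j + 1) = α ^ (m + 1) - α := by
    have h1 : ∀ j : ℕ, (α - 1) * α ^ (j + 1) = α ^ (j + 1 + 1) - α ^ (j + 1) := by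
      intro j; ring
    calc (α - 1) * ∑ j ∈ Finset.range m, α ^ (j + 1)
        = ∑ j ∈ Finset.range m, ((α - 1) * α ^ (j + 1)) := Finset.mul_sum _ _ _
      _ = ∑ j ∈ Finset.range m, (α ^ (j + 1 + 1) - α ^ (j + 1)) := by
          exact Finset.sum_congr rfl (fun j _ => h1 j)
      _ = α ^ (m + 1) - α ^ (0 + 1) := Finset.sum_range_sub (fun j => α ^ (j + 1)) m
      _ = α ^ (m + 1) - α := by rw [pow_one]
  have hsumnn : (0 : ℝ) ≤ ∑ j ∈ Finset.range m, α ^ (j + 1) :=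
    Finset.sum_nonneg (fun j _ => le_of_lt (pow_pos hαpos _))
  have htail : |∑ j ∈ Finset.range m, (c j : ℝ) * α ^ (j + 1)| ≤ α ^ (m + 1) - α := by
    calc |∑ j ∈ Finset.range m, (c j : ℝ) * α ^ (j + 1)|
        ≤ ∑ j ∈ Finset.range m, |(c j : ℝ) * α ^ (j + 1)| :=
          Finset.abs_sum_le_sum_abs _ _
      _ ≤ ∑ j ∈ Finset.range m, Bd * α ^ (j + 1) := by
          apply Finset.sum_le_sum
          intro j _
          rw [abs_mul, abs_of_pos (pow_pos hαpos _)]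
          exact mul_le_mul_of_nonneg_right (hbd j) (le_of_lt (pow_pos hαpos _))
      _ = Bd * ∑ j ∈ Finset.range m, α ^ (j + 1) := (Finset.mul_sum _ _ _).symm
      _ ≤ (α - 1) * ∑ j ∈ Finset.range m, α ^ (j + 1) :=
          mul_le_mul_of_nonneg_right (by linarith) hsumnn
      _ = α ^ (m + 1) - α := htel
  have hcm1 : (1 : ℝ) ≤ |(c m : ℝ)| := by exact_mod_cast Int.one_le_abs hcm
  intro h0
  have hEq : (c m : ℝ) * α ^ (m + 1) = -(∑ j ∈ Finset.range m, (c j : ℝ) * α ^ (j + 1)) := by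
    linarith
  have h1 : α ^ (m + 1) ≤ |(c m : ℝ) * α ^ (m + 1)| := by
    rw [abs_mul, abs_of_pos (pow_pos hαpos _)]
    nlinarith [pow_pos hαpos (m + 1)]
  rw [hEq, abs_neg] at h1
  linarith

theorem stacked_combo_full_rank (n k : ℕ) (hk : k < n)
    (W : Matrix (Fin n) (Fin k) ℤ)
    (hW : (W.map (Int.cast : ℤ → ℝ)).rank = k)
    (β : ℤ) (hβ : ∀ i j, |W i j| ≤ β)
    (α : ℝ) (hα : (1 : ℝ) + (k : ℝ) ^ k * (β : ℝ) ^ k ≤ α)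
    (S : Finset (Fin n)) (hScard : S.card = k - 1)
    (hSrank : ((W.map (Int.cast : ℤ → ℝ)).submatrix (fun i : S => (i : Fin n)) id).rank
      = k - 1) :
    (Matrix.fromRows
        (Matrix.of fun (_ : Fin 1) (j : Fin k) =>
          ∑ i : Fin n, α ^ ((i : ℕ) + 1) * (W i j : ℝ))
        ((W.map (Int.cast : ℤ → ℝ)).submatrix (fun i : S => (i : Fin n)) id)).rank = k := by
  classical
  rcases Nat.eq_zero_or_pos k with hk0 | hkpos
  · subst hk0
    have h1 := Matrix.rank_le_card_width (Matrix.fromRows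
        (Matrix.of fun (_ : Fin 1) (j : Fin 0) =>
          ∑ i : Fin n, α ^ ((i : ℕ) + 1) * (W i j : ℝ))
        ((W.map (Int.cast : ℤ → ℝ)).submatrix (fun i : S => (i : Fin n)) id))
    simpa using h1
  have hn0 : 0 < n := lt_trans hkpos hk
  set Wr : Matrix (Fin n) (Fin k) ℝ := W.map (Int.cast : ℤ → ℝ) with hWrdef
  set WS : Matrix S (Fin k) ℝ := Wr.submatrix (fun i : S => (i : Fin n)) id with hWSdef
  set v : Matrix (Fin 1) (Fin k) ℝ :=
    Matrix.of fun (_ : Fin 1) (j : Fin k) => ∑ i : Fin n, α ^ ((i : ℕ) + 1) * (W i j : ℝ)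
    with hvdef
  set F : Matrix (Fin 1 ⊕ S) (Fin k) ℝ := Matrix.fromRows v WS with hFdef
  have hcard : Fintype.card (Fin 1 ⊕ S) = k := by
    simp only [Fintype.card_sum, Fintype.card_fin, Fintype.card_coe, hScard]
    omega
  let e : (Fin 1 ⊕ S) ≃ Fin k := Fintype.equivFinOfCardEq hcard
  set B : Matrix (Fin k) (Fin k) ℝ := F.submatrix (⇑e.symm) id with hBdef
  have hrankFB : B.rank = F.rank := aux_rank_submatrix_equiv_left F e.symm
  set i0 : Fin k := e (Sum.inl 0) with hi0def
  -- integer stacked matrices and their determinants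
  set WSZ : Matrix S (Fin k) ℤ := W.submatrix (fun i : S => (i : Fin n)) id with hWSZdef
  set Z : Fin n → Matrix (Fin k) (Fin k) ℤ := fun i =>
    (Matrix.fromRows (Matrix.of fun (_ : Fin 1) j => W i j) WSZ).submatrix (⇑e.symm) id
    with hZdef
  set d : Fin n → ℤ := fun i => (Z i).det with hddef
  -- B with row i0 replaced by row i of W equals Z i over ℝ
  have hBZ : ∀ i : Fin n, B.updateRow i0 (fun j => ((W i j : ℤ) : ℝ))
      = (Z i).map (Int.cast : ℤ → ℝ) := by
    intro i
    ext r j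
    rcases eq_or_ne r i0 with h | h
    · subst h
      rw [Matrix.updateRow_self]
      simp only [hZdef, Matrix.map_apply, Matrix.submatrix_apply, hi0def,
        Equiv.symm_apply_apply, Matrix.fromRows_apply_inl, Matrix.of_apply, id]
    · rw [Matrix.updateRow_ne h]
      rcases hr : e.symm r with t | s
      · exfalso
        apply h
        have ht : t = 0 := Subsingleton.elim t 0
        have : r = e (Sum.inl 0) := by
          rw [← ht, ← hr, Equiv.apply_symm_apply]
        exact this
      · simp only [hBdef, hZdef, Matrix.map_apply, Matrix.submatrix_apply, hr, id,
          Matrix.fromRows_apply_inr, hFdef, hWSZdef, hWSdef, hWrdef]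
  have hdetBZ : ∀ i : Fin n,
      (B.updateRow i0 (fun j => ((W i j : ℤ) : ℝ))).det = ((d i : ℤ) : ℝ) := by
    intro i
    rw [hBZ i, hddef]
    exact ((Int.castRingHom ℝ).map_det (Z i)).symm
  -- determinant expansion of B
  have hrowB : B i0 = fun j => ∑ i : Fin n, α ^ ((i : ℕ) + 1) * (W i j : ℝ) := by
    funext j
    simp only [hBdef, Matrix.submatrix_apply, hi0def, Equiv.symm_apply_apply, id,
      hFdef, Matrix.fromRows_apply_inl, hvdef, Matrix.of_apply]
  have hdetB : B.det = ∑ i : Fin n, α ^ ((i : ℕ) + 1) * ((d i : ℤ) : ℝ) := by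
    have h1 : B = B.updateRow i0 (∑ i : Fin n, (α ^ ((i : ℕ) + 1)) • (fun j => ((W i j : ℤ) : ℝ))) := by
      rw [show (∑ i : Fin n, (α ^ ((i : ℕ) + 1)) • (fun j => ((W i j : ℤ) : ℝ))) = B i0 by
        funext j
        rw [hrowB]
        simp [Finset.sum_apply]]
      rw [Matrix.updateRow_eq_self]
    conv_lhs => rw [h1]
    rw [aux_det_updateRow_sum]
    refine Finset.sum_congr rfl (fun i _ => ?_)
    rw [Matrix.det_updateRow_smul, hdetBZ i]
  -- bound on the determinants
  have hβ0 : (0 : ℤ) ≤ β := le_trans (abs_nonneg _) (hβ ⟨0, hn0⟩ ⟨0, hkpos⟩)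
  have hdbound : ∀ i : Fin n, |((d i : ℤ) : ℝ)| ≤ (k : ℝ) ^ k * (β : ℝ) ^ k := by
    intro i
    have hent : ∀ r j, |Z i r j| ≤ β := by
      intro r j
      simp only [hZdef, Matrix.submatrix_apply]
      rcases e.symm r with t | s
      · exact hβ i j
      · exact hβ s j
    have h1 := Matrix.det_le (A := Z i) (abv := (AbsoluteValue.abs : AbsoluteValue ℤ ℤ)) hent
    rw [Fintype.card_fin, nsmul_eq_mul, AbsoluteValue.abs_apply] at h1
    have h2 : |((d i : ℤ) : ℝ)| ≤ ((Nat.factorial k : ℤ) * β ^ k : ℤ) := by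
      rw [← Int.cast_abs]
      exact_mod_cast h1
    refine le_trans h2 ?_
    push_cast
    have hfact : ((Nat.factorial k : ℝ)) ≤ (k : ℝ) ^ k := by
      exact_mod_cast Nat.factorial_le_pow k
    have hbk : (0 : ℝ) ≤ (β : ℝ) ^ k := pow_nonneg (by exact_mod_cast hβ0) k
    exact mul_le_mul_of_nonneg_right hfact hbk
  -- some determinant is nonzero
  have hne : ∃ i : Fin n, d i ≠ 0 := by
    by_contra hall
    push_neg at hall
    -- kernel of WS has dimension 1
    have hrn := LinearMap.finrank_range_add_finrank_ker (Matrix.mulVecLin WS)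
    rw [Module.finrank_fin_fun] at hrn
    have hWSrank : Module.finrank ℝ (LinearMap.range WS.mulVecLin) = k - 1 := hSrank
    have hker1 : Module.finrank ℝ (LinearMap.ker WS.mulVecLin) = 1 := by omega
    have hkerne : LinearMap.ker WS.mulVecLin ≠ ⊥ := by
      intro hbot
      rw [hbot] at hker1
      simp at hker1
    obtain ⟨x, hxK, hx0⟩ := (Submodule.ne_bot_iff _).1 hkerne
    -- x is killed by every row of W
    have hWx : ∀ i : Fin n, (fun j => ((W i j : ℤ) : ℝ)) ⬝ᵥ x = 0 := by
      intro i
      have hdet0 : (B.updateRow i0 (fun j => ((W i j : ℤ) : ℝ))).det = 0 := by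
        rw [hdetBZ i, hall i]; simp
      obtain ⟨y, hy0, hy⟩ := (Matrix.exists_mulVec_eq_zero_iff).2 hdet0
      have hyS : y ∈ LinearMap.ker WS.mulVecLin := by
        rw [LinearMap.mem_ker]
        ext s
        have hne2 : e (Sum.inr s) ≠ i0 := by
          simp only [hi0def]
          exact fun hc => by simpa using e.injective hc
        have h3 := congrFun hy (e (Sum.inr s))
        rw [Matrix.mulVec, Matrix.updateRow_ne hne2] at h3
        have h4 : B (e (Sum.inr s)) = WS s := by
          funext j
          simp only [hBdef, Matrix.submatrix_apply, Equiv.symm_apply_apply, id,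
            hFdef, Matrix.fromRows_apply_inr]
        rw [h4] at h3
        simpa [Matrix.mulVecLin, Matrix.mulVec] using h3
      have hyi : (fun j => ((W i j : ℤ) : ℝ)) ⬝ᵥ y = 0 := by
        have h3 := congrFun hy i0
        rwa [Matrix.mulVec, Matrix.updateRow_self] at h3
      -- span of y equals the kernel
      have hspan : Submodule.span ℝ {y} = LinearMap.ker WS.mulVecLin := by
        apply Submodule.eq_of_le_of_finrank_le
        · rw [Submodule.span_le, Set.singleton_subset_iff]
          exact hyS
        · rw [hker1, finrank_span_singleton hy0]
      have hxspan : x ∈ Submodule.span ℝ {y} := hspan ▸ hxK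
      obtain ⟨c, hc⟩ := Submodule.mem_span_singleton.1 hxspan
      rw [← hc, dotProduct_smul, hyi, smul_zero]
    -- then x is in the kernel of W, which is trivial
    have hrn2 := LinearMap.finrank_range_add_finrank_ker (Matrix.mulVecLin Wr)
    rw [Module.finrank_fin_fun] at hrn2
    have hWrank : Module.finrank ℝ (LinearMap.range Wr.mulVecLin) = k := hW
    have hker0 : Module.finrank ℝ (LinearMap.ker Wr.mulVecLin) = 0 := by omega
    have hkerbot : LinearMap.ker Wr.mulVecLin = ⊥ := Submodule.finrank_eq_zero.1 hker0
    have hxker : x ∈ LinearMap.ker Wr.mulVecLin := by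
      rw [LinearMap.mem_ker]
      ext i
      have := hWx i
      simpa [Matrix.mulVecLin, Matrix.mulVec, hWrdef, dotProduct] using this
    rw [hkerbot, Submodule.mem_bot] at hxker
    exact hx0 hxker
  -- conclude det B ≠ 0
  set c : ℕ → ℤ := fun j => if h : j < n then d ⟨j, h⟩ else 0 with hcdef
  have hdetB' : B.det = ∑ j ∈ Finset.range n, ((c j : ℤ) : ℝ) * α ^ (j + 1) := by
    calc B.det = ∑ i : Fin n, ((c (i : ℕ) : ℤ) : ℝ) * α ^ ((i : ℕ) + 1) := by
          rw [hdetB]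
          refine Finset.sum_congr rfl (fun i _ => ?_)
          rw [hcdef]
          simp only [dif_pos i.isLt, Fin.eta]
          ring
      _ = ∑ j ∈ Finset.range n, ((c j : ℤ) : ℝ) * α ^ (j + 1) :=
          Fin.sum_univ_eq_sum_range (fun j => ((c j : ℤ) : ℝ) * α ^ (j + 1)) n
  have hdetne : B.det ≠ 0 := by
    rw [hdetB']
    apply aux_poly_ne_zero n c ((k : ℝ) ^ k * (β : ℝ) ^ k) α _ hα
    · obtain ⟨i, hi⟩ := hne
      exact ⟨i, i.isLt, by simp [hcdef, i.isLt, hi]⟩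
    · intro j
      by_cases h : j < n
      · simpa [hcdef, h] using hdbound ⟨j, h⟩
      · simp only [hcdef, dif_neg h, Int.cast_zero, abs_zero]
        positivity
  have hBrank : B.rank = k := by
    have hu : IsUnit B := (Matrix.isUnit_iff_isUnit_det B).2 (isUnit_iff_ne_zero.2 hdetne)
    rw [Matrix.rank_of_isUnit B hu, Fintype.card_fin]
  rw [← hrankFB]
  exact hBrank
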